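/- Let K be a field, d ≥ 3 an integer, and F ∈ K[x₀,x₁,x₂] a nonzero homogeneous polynomial of degree d. Suppose there exist integers w₀ ≥ w₁ ≥ w₂ with w₀ + w₁ + w₂ = 0 such that every exponent vector (i₀,i₁,i₂) in the support of F satisfies i₀·w₀ + i₁·w₁ + i₂·w₂ > 0. Then at least one of the following holds: (a) x₀^m divides F for some integer m with 3m > d; (b) F lies in the ideal power (x₀,x₁)^m for some integer m with 3m > 2d; (c) letting m be the largest integer such that x₀^m divides F, one has 0 < m, 3m ≤ d, and, writing F = x₀^m·G with x₀ not dividing G, the minimal k such that the monomial x₁^k·x₂^{d−m−k} has nonzero coefficient in G satisfies 2k > d − m; (d) letting m be the largest integer such that F ∈ (x₀,x₁)^m, one has 2m > d, 3m ≤ 2d, and the minimal k such that the monomial x₀^k·x₁^{m−k}·x₂^{d−m} has nonzero coefficient in F satisfies 2k > m. -/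

import Mathlib

open MvPolynomial

namespace Prop24Aux

variable {K : Type*} [Field K]

lemma rep3 (i : Fin 3 →₀ ℕ) :
    i = Finsupp.single 0 (i 0) + Finsupp.single 1 (i 1) + Finsupp.single 2 (i 2) := by
  ext j
  fin_cases j <;> simp [Finsupp.single_apply]

lemma degree3 (i : Fin 3 →₀ ℕ) : i.degree = i 0 + i 1 + i 2 := by
  rw [Finsupp.degree_apply,
    Finset.sum_subset (Finset.subset_univ i.support)
      (fun x _ hx => Finsupp.notMem_support_iff.mp hx)]
  exact Fin.sum_univ_three i

lemma deg3 {d : ℕ} {F : MvPolynomial (Fin 3) K} (hhom : F.IsHomogeneous d)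
    {i : Fin 3 →₀ ℕ} (hi : i ∈ F.support) : i 0 + i 1 + i 2 = d := by
  have h := hhom (MvPolynomial.mem_support_iff.mp hi)
  change (Finsupp.weight fun _ => 1) i = d at h
  rw [← Finsupp.degree_eq_weight_one, degree3] at h
  exact h

lemma Xpow_dvd_iff (F : MvPolynomial (Fin 3) K) (m : ℕ) :
    (X 0 : MvPolynomial (Fin 3) K) ^ m ∣ F ↔ ∀ i ∈ F.support, m ≤ i 0 := by
  rw [X_pow_eq_monomial, monomial_one_dvd_iff_modMonomial_eq_zero]
  constructor
  · intro h i hi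
    by_contra hm
    have hle : ¬ Finsupp.single (0 : Fin 3) m ≤ i := by
      rw [Finsupp.single_le_iff]; exact hm
    have := coeff_modMonomial_of_not_le F hle
    rw [h] at this
    exact (MvPolynomial.mem_support_iff.mp hi) (by simpa using this.symm)
  · intro h
    ext j
    rcases le_or_gt m (j 0) with hj | hj
    · rw [coeff_modMonomial_of_le F (by rwa [Finsupp.single_le_iff]), coeff_zero]
    · rw [coeff_modMonomial_of_not_le F (by rw [Finsupp.single_le_iff]; omega), coeff_zero]
      by_contra hc
      exact absurd (h j (MvPolynomial.mem_support_iff.mpr hc)) (by omega)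

/-- the ideal of polynomials all of whose monomials have `i 0 + i 1 ≥ m` -/
def Jid (K : Type*) [Field K] (m : ℕ) : Ideal (MvPolynomial (Fin 3) K) where
  carrier := {F | ∀ i ∈ F.support, m ≤ i 0 + i 1}
  zero_mem' := by simp
  add_mem' := by
    intro f g hf hg i hi
    rcases Finset.mem_union.mp (MvPolynomial.support_add hi) with h | h
    · exact hf i h
    · exact hg i h
  smul_mem' := by
    intro c f hf i hi
    have := MvPolynomial.support_mul c f (by simpa using hi)
    rcases Finset.mem_add.mp this with ⟨j, hj, l, hl, rfl⟩
    have := hf l hl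
    simp only [Finsupp.add_apply]
    omega

lemma mul_mem_Jid {m n : ℕ} {f g : MvPolynomial (Fin 3) K}
    (hf : f ∈ Jid K m) (hg : g ∈ Jid K n) : f * g ∈ Jid K (m + n) := by
  intro i hi
  rcases Finset.mem_add.mp (MvPolynomial.support_mul f g hi) with ⟨j, hj, l, hl, rfl⟩
  have h1 := hf j hj
  have h2 := hg l hl
  simp only [Finsupp.add_apply]
  omega

lemma span_pow_le_Jid (m : ℕ) :
    (Ideal.span {(X 0 : MvPolynomial (Fin 3) K), X 1}) ^ m ≤ Jid K m := by
  induction m with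
  | zero => intro f _ i _; exact Nat.zero_le _
  | succ m ih =>
    rw [pow_succ]
    refine (Ideal.mul_le).mpr (fun f hf g hg => ?_)
    have hspan : Ideal.span {(X 0 : MvPolynomial (Fin 3) K), X 1} ≤ Jid K 1 := by
      refine Ideal.span_le.mpr ?_
      intro x hx
      rcases hx with h | h
      · subst h
        intro i hi
        rw [MvPolynomial.support_X] at hi
        simp at hi
        subst hi
        simp
      · simp only [Set.mem_singleton_iff] at h
        subst h
        intro i hi
        rw [MvPolynomial.support_X] at hi
        simp at hi
        subst hi
        simp
    exact mul_mem_Jid (ih hf) (hspan hg)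

lemma mem_pow_of_supp {m : ℕ} {F : MvPolynomial (Fin 3) K}
    (h : ∀ i ∈ F.support, m ≤ i 0 + i 1) :
    F ∈ (Ideal.span {(X 0 : MvPolynomial (Fin 3) K), X 1}) ^ m := by
  set I := Ideal.span {(X 0 : MvPolynomial (Fin 3) K), X 1} with hI
  have hX0 : (X 0 : MvPolynomial (Fin 3) K) ∈ I := Ideal.subset_span (by simp)
  have hX1 : (X 1 : MvPolynomial (Fin 3) K) ∈ I := Ideal.subset_span (by simp)
  rw [← MvPolynomial.support_sum_monomial_coeff F]
  refine Ideal.sum_mem _ (fun i hi => ?_)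
  have hmono : (monomial i (coeff i F) : MvPolynomial (Fin 3) K)
      = C (coeff i F) * X 2 ^ (i 2) * (X 0 ^ (i 0) * X 1 ^ (i 1)) := by
    rw [monomial_eq, Finsupp.prod_fintype _ _ (fun j => pow_zero _), Fin.prod_univ_three]
    ring
  rw [hmono]
  refine Ideal.mul_mem_left _ _ ?_
  have h1 : (X 0 : MvPolynomial (Fin 3) K) ^ (i 0) * X 1 ^ (i 1) ∈ I ^ (i 0 + i 1) := by
    rw [pow_add]
    exact Ideal.mul_mem_mul (Ideal.pow_mem_pow hX0 _) (Ideal.pow_mem_pow hX1 _)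
  exact Ideal.pow_le_pow_right (h i hi) h1

end Prop24Aux

lemma Prop24Aux.zlem1 (p q av k d : ℤ) (hpq : q ≤ p) (hq0 : 0 ≤ q) (hp0 : 0 < p)
    (hda : 3 * av ≤ d) (hkey : d * (p + q) < 3 * (p * av + q * k)) :
    0 < q ∧ d - av < 2 * k := by
  have e1 : p * (d - 3 * av) < q * (3 * k - d) := by nlinarith
  have hq1 : 0 < q := by
    rcases lt_or_eq_of_le hq0 with h | h
    · exact h
    · exfalso; rw [← h] at e1; nlinarith
  have h3k : (0:ℤ) < 3 * k - d := by
    nlinarith [mul_nonneg hp0.le (by linarith : (0:ℤ) ≤ d - 3 * av)]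
  have h5 : d - 3 * av < 3 * k - d := by
    by_contra hcon
    push_neg at hcon
    nlinarith [mul_le_mul_of_nonneg_left hpq h3k.le]
  exact ⟨hq1, by linarith⟩

lemma Prop24Aux.zlem2 (p q k d : ℤ) (hd : 0 < d) (hkd : k ≤ d) (hq1 : 0 < q)
    (hkey : d * (p + q) < 3 * (q * k)) : p < 2 * q := by
  by_contra hcon
  push_neg at hcon
  have h1 : q * k ≤ q * d := mul_le_mul_of_nonneg_left hkd hq1.le
  have h2 : d * (3 * q) ≤ d * (p + q) := mul_le_mul_of_nonneg_left (by linarith) hd.le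
  linarith

lemma Prop24Aux.zlem3 (p q u v b d : ℤ) (hpq : q ≤ p) (hp0 : 0 < p) (hq1 : 0 < q)
    (hd : 0 < d) (hpq2 : p < 2 * q) (huv : u + v = b) (hu0 : 0 ≤ u) (hv0 : 0 ≤ v)
    (hb : 3 * b ≤ 2 * d) (hkey : d * (p + q) < 3 * (p * u + q * v)) :
    d < 2 * b ∧ b < 2 * u := by
  have h6 : p * u + q * v ≤ p * b := by
    nlinarith [mul_le_mul_of_nonneg_right hpq hv0]
  constructor
  · by_contra hcon
    push_neg at hcon
    nlinarith [mul_le_mul_of_nonneg_left hcon hp0.le]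
  · by_contra hcon
    push_neg at hcon
    have h7 : 2 * (p * u + q * v) ≤ b * (p + q) := by
      nlinarith [mul_le_mul_of_nonneg_right hcon (sub_nonneg.mpr hpq)]
    nlinarith

set_option maxHeartbeats 1000000 in
/-- Proposition 2.4(i) of the paper, stated in the coordinate system realizing the
instability: if a nonzero homogeneous form `F` of degree `d ≥ 3` in three variables
admits a balanced ordered integral weight vector `w` with `⟨i,w⟩ > 0` for all exponent
vectors `i` in the support of `F`, then one of the four configurations (a)-(d) holds. -/
theorem stmt0 {K : Type*} [Field K] (d : ℕ) (hd : 3 ≤ d)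
    (F : MvPolynomial (Fin 3) K) (hF : F ≠ 0) (hhom : F.IsHomogeneous d)
    (w : Fin 3 → ℤ) (hw01 : w 1 ≤ w 0) (hw12 : w 2 ≤ w 1)
    (hsum : w 0 + w 1 + w 2 = 0)
    (hinst : ∀ i ∈ F.support,
      0 < (i 0 : ℤ) * w 0 + (i 1 : ℤ) * w 1 + (i 2 : ℤ) * w 2) :
    -- (a) the line x₀ = 0 is a component of multiplicity m > d/3
    (∃ m : ℕ, d < 3 * m ∧ (X 0 : MvPolynomial (Fin 3) K) ^ m ∣ F) ∨
    -- (b) the point [0:0:1] has multiplicity m > 2d/3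
    (∃ m : ℕ, 2 * d < 3 * m ∧
      F ∈ (Ideal.span {(X 0 : MvPolynomial (Fin 3) K), X 1}) ^ m) ∨
    -- (c) m is the exact multiplicity of the line x₀ = 0, 0 < m, 3m ≤ d, and the
    -- minimal k with x₁^k x₂^(d-m-k) occurring in G (where F = x₀^m G) satisfies 2k > d-m
    (∃ (m k : ℕ) (G : MvPolynomial (Fin 3) K),
      F = X 0 ^ m * G ∧ ¬ (X 0 : MvPolynomial (Fin 3) K) ∣ G ∧
      0 < m ∧ 3 * m ≤ d ∧
      G.coeff (Finsupp.single 1 k + Finsupp.single 2 (d - m - k)) ≠ 0 ∧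
      (∀ k' < k, G.coeff (Finsupp.single 1 k' + Finsupp.single 2 (d - m - k')) = 0) ∧
      d - m < 2 * k) ∨
    -- (d) m is the exact multiplicity of the point [0:0:1], 2m > d, 3m ≤ 2d, and the
    -- minimal k with x₀^k x₁^(m-k) x₂^(d-m) occurring in F satisfies 2k > m
    (∃ m k : ℕ,
      F ∈ (Ideal.span {(X 0 : MvPolynomial (Fin 3) K), X 1}) ^ m ∧
      F ∉ (Ideal.span {(X 0 : MvPolynomial (Fin 3) K), X 1}) ^ (m + 1) ∧
      d < 2 * m ∧ 3 * m ≤ 2 * d ∧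
      F.coeff (Finsupp.single 0 k + Finsupp.single 1 (m - k) + Finsupp.single 2 (d - m)) ≠ 0 ∧
      (∀ k' < k, F.coeff (Finsupp.single 0 k' + Finsupp.single 1 (m - k') +
        Finsupp.single 2 (d - m)) = 0) ∧
      m < 2 * k) := by
  classical
  have hS : F.support.Nonempty := MvPolynomial.support_nonempty.mpr hF
  have hdeg : ∀ i ∈ F.support, i 0 + i 1 + i 2 = d := fun i hi => Prop24Aux.deg3 hhom hi
  obtain ⟨p, hp⟩ : ∃ p : ℤ, p = w 0 - w 2 := ⟨_, rfl⟩
  obtain ⟨q, hq⟩ : ∃ q : ℤ, q = w 1 - w 2 := ⟨_, rfl⟩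
  have hq0 : 0 ≤ q := by rw [hq]; linarith
  have hpq : q ≤ p := by rw [hp, hq]; linarith
  have hdZ : (0:ℤ) < d := by exact_mod_cast lt_of_lt_of_le (by norm_num) hd
  have key : ∀ i ∈ F.support, (d:ℤ) * (p + q) < 3 * (p * i 0 + q * i 1) := by
    intro i hi
    have h1 := hinst i hi
    have h2 : (i 0 : ℤ) + i 1 + i 2 = d := by exact_mod_cast hdeg i hi
    have h3 : 3 * (p * i 0 + q * i 1) - (d:ℤ) * (p + q)
        = 3 * ((i 0 : ℤ) * w 0 + (i 1 : ℤ) * w 1 + (i 2 : ℤ) * w 2) := by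
      simp only [hp, hq]
      linear_combination (-3 * w 2) * h2 + (-(d:ℤ)) * hsum
    linarith
  have hp0 : 0 < p := by
    rcases lt_or_eq_of_le (le_trans hq0 hpq) with h | h
    · exact h
    · exfalso
      obtain ⟨i, hi⟩ := hS
      have hk := key i hi
      have hq' : q = 0 := le_antisymm (h ▸ hpq) hq0
      rw [← h, hq'] at hk
      simp at hk
  obtain ⟨av, hav⟩ : ∃ av, av = F.support.inf' hS (fun i => i 0) := ⟨_, rfl⟩
  obtain ⟨ia, hiaS, hia⟩ := Finset.exists_mem_eq_inf' hS (fun i => i 0)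
  rw [← hav] at hia
  have halow : ∀ i ∈ F.support, av ≤ i 0 := fun i hi => hav ▸ Finset.inf'_le _ hi
  by_cases hcase_a : d < 3 * av
  · exact Or.inl ⟨av, hcase_a, (Prop24Aux.Xpow_dvd_iff F av).mpr halow⟩
  push_neg at hcase_a
  have hdaZ : 3 * (av:ℤ) ≤ d := by exact_mod_cast hcase_a
  obtain ⟨T, hT⟩ : ∃ T, T = F.support.filter (fun i => i 0 = av) := ⟨_, rfl⟩
  have hTne : T.Nonempty := ⟨ia, by rw [hT]; exact Finset.mem_filter.mpr ⟨hiaS, hia.symm⟩⟩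
  obtain ⟨k, hkdef⟩ : ∃ k, k = T.inf' hTne (fun i => i 1) := ⟨_, rfl⟩
  obtain ⟨ik, hikT, hik⟩ := Finset.exists_mem_eq_inf' hTne (fun i => i 1)
  rw [hT] at hikT
  have hikS : ik ∈ F.support := (Finset.mem_filter.mp hikT).1
  have hik0 : ik 0 = av := (Finset.mem_filter.mp hikT).2
  have hklow : ∀ i ∈ F.support.filter (fun i => i 0 = av), k ≤ i 1 := by
    rw [hkdef, ← hT]; exact fun i hi => Finset.inf'_le _ hi
  have hkk : k = ik 1 := hkdef.trans hik
  have hkey := key ik hikS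
  rw [hik0, ← hkk] at hkey
  -- hkey : d * (p + q) < 3 * (p * av + q * k)
  obtain ⟨hq1, h2k⟩ := Prop24Aux.zlem1 p q av k d hpq hq0 hp0 hdaZ hkey
  have hsum_ik : ik 0 + ik 1 + ik 2 = d := hdeg ik hikS
  rcases Nat.eq_zero_or_pos av with hav0 | hav0
  · -- av = 0 : cases (b) or (d)
    have hkd : (k:ℤ) ≤ d := by
      have : k ≤ d := by omega
      exact_mod_cast this
    have hpq2 : p < 2 * q := by
      rw [hav0] at hkey
      simp only [Nat.cast_zero, mul_zero, zero_add] at hkey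
      exact Prop24Aux.zlem2 p q k d hdZ hkd hq1 hkey
    obtain ⟨b, hbdef⟩ : ∃ b, b = F.support.inf' hS (fun i => i 0 + i 1) := ⟨_, rfl⟩
    obtain ⟨ib, hibS, hib⟩ := Finset.exists_mem_eq_inf' hS (fun i => i 0 + i 1)
    rw [← hbdef] at hib
    have hblow : ∀ i ∈ F.support, b ≤ i 0 + i 1 := fun i hi => hbdef ▸ Finset.inf'_le _ hi
    by_cases hcase_b : 2 * d < 3 * b
    · exact Or.inr (Or.inl ⟨b, hcase_b, Prop24Aux.mem_pow_of_supp hblow⟩)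
    push_neg at hcase_b
    have hbZ : 3 * (b:ℤ) ≤ 2 * d := by exact_mod_cast hcase_b
    obtain ⟨T', hT'⟩ : ∃ T', T' = F.support.filter (fun i => i 0 + i 1 = b) := ⟨_, rfl⟩
    have hT'ne : T'.Nonempty := ⟨ib, by rw [hT']; exact Finset.mem_filter.mpr ⟨hibS, hib.symm⟩⟩
    obtain ⟨k', hk'def⟩ : ∃ k', k' = T'.inf' hT'ne (fun i => i 0) := ⟨_, rfl⟩
    obtain ⟨j, hjT, hjk⟩ := Finset.exists_mem_eq_inf' hT'ne (fun i => i 0)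
    rw [hT'] at hjT
    have hjS : j ∈ F.support := (Finset.mem_filter.mp hjT).1
    have hjb : j 0 + j 1 = b := (Finset.mem_filter.mp hjT).2
    have hk'low : ∀ i ∈ F.support.filter (fun i => i 0 + i 1 = b), k' ≤ i 0 := by
      rw [hk'def, ← hT']; exact fun i hi => Finset.inf'_le _ hi
    have hj0 : j 0 = k' := (hk'def.trans hjk).symm
    have hkeyj := key j hjS
    -- work with u := k', v := j 1
    obtain ⟨u, hu⟩ : ∃ u : ℤ, u = (k' : ℤ) := ⟨_, rfl⟩
    obtain ⟨v, hv⟩ : ∃ v : ℤ, v = (j 1 : ℤ) := ⟨_, rfl⟩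
    have huv : u + v = b := by rw [hu, hv]; exact_mod_cast (hj0 ▸ hjb)

    have hv0 : (0:ℤ) ≤ v := by rw [hv]; positivity
    have hu0 : (0:ℤ) ≤ u := by rw [hu]; positivity
    have hkeyu : (d:ℤ) * (p + q) < 3 * (p * u + q * v) := by
      rw [hu, hv, ← hj0]; exact hkeyj
    obtain ⟨hd2, hk'2⟩ := Prop24Aux.zlem3 p q u v b d hpq hp0 hq1 hdZ hpq2 huv hu0 hv0 hbZ hkeyu
    -- set up case (d)
    have hjsum : j 0 + j 1 + j 2 = d := hdeg j hjS
    have hk'b : k' ≤ b := by omega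
    have hbd : b ≤ d := by omega
    have hj1 : j 1 = b - k' := by omega
    have hj2 : j 2 = d - b := by omega
    refine Or.inr (Or.inr (Or.inr ⟨b, k', Prop24Aux.mem_pow_of_supp hblow, ?_, ?_, hcase_b,
      ?_, ?_, ?_⟩))
    · intro hmem
      have := Prop24Aux.span_pow_le_Jid (b + 1) hmem ib hibS
      omega
    · -- d < 2b
      exact_mod_cast hd2
    · -- coeff nonzero
      have hrep := Prop24Aux.rep3 j
      rw [hj0, hj1, hj2] at hrep
      rw [← hrep]
      exact MvPolynomial.mem_support_iff.mp hjS
    · -- minimality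
      intro k'' hk''
      by_contra hc
      set jj := Finsupp.single (0:Fin 3) k'' + Finsupp.single 1 (b - k'') +
        Finsupp.single 2 (d - b) with hjj
      have hjjS : jj ∈ F.support := MvPolynomial.mem_support_iff.mpr hc
      have hjj0 : jj 0 = k'' := by simp [hjj, Finsupp.single_apply]
      have hjj1 : jj 1 = b - k'' := by simp [hjj, Finsupp.single_apply]
      have := hk'low jj (Finset.mem_filter.mpr ⟨hjjS, by rw [hjj0, hjj1]; omega⟩)
      omega
    · -- b < 2 k'
      rw [hu] at hk'2
      exact_mod_cast hk'2
  · -- av > 0 : case (c)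
    obtain ⟨G, hG⟩ := (Prop24Aux.Xpow_dvd_iff F av).mpr halow
    have hcoeff : ∀ j, G.coeff j = F.coeff (Finsupp.single 0 av + j) := by
      intro j
      rw [hG, X_pow_eq_monomial, coeff_monomial_mul, one_mul]
    have hkd : av + k ≤ d := by omega
    refine Or.inr (Or.inr (Or.inl ⟨av, k, G, hG, ?_, hav0, hcase_a, ?_, ?_, ?_⟩))
    · intro hdvd1
      have hdd : (X 0 : MvPolynomial (Fin 3) K) ^ (av + 1) ∣ F := by
        rw [hG, pow_succ]
        exact mul_dvd_mul_left _ hdvd1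
      have := (Prop24Aux.Xpow_dvd_iff F (av + 1)).mp hdd ia hiaS
      omega
    · -- coeff nonzero
      have hik2 : ik 2 = d - av - k := by omega
      have hrep := Prop24Aux.rep3 ik
      rw [hik0, ← hkk, hik2] at hrep
      rw [hcoeff, ← add_assoc, ← hrep]
      exact MvPolynomial.mem_support_iff.mp hikS
    · -- minimality
      intro k'' hk''
      rw [hcoeff]
      by_contra hc
      set jj := Finsupp.single (0:Fin 3) av + (Finsupp.single 1 k'' +
        Finsupp.single 2 (d - av - k'')) with hjj
      have hjjS : jj ∈ F.support := MvPolynomial.mem_support_iff.mpr hc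
      have hjj0 : jj 0 = av := by simp [hjj, Finsupp.single_apply]
      have hjj1 : jj 1 = k'' := by simp [hjj, Finsupp.single_apply]
      have := hklow jj (Finset.mem_filter.mpr ⟨hjjS, hjj0⟩)
      omega
    · -- d - av < 2k
      omega
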